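/- Let t ∈ (0,1), let Δ̃ : ℝ → ℝ be measurable, and let k1, k2 : ℝ × ℝ → ℝ be measurable kernels such that ∫∫ |Δ̃(z1) Δ̃(z2) k_i(z1,z2)| dz1 dz2 < ∞ for i = 1,2. Define Z(s,z) = (min(s,t) − st)·Δ̃(z) and h(s1,z1,s2,z2) = { min(s1,s2,t) + s1 s2 t − s2·min(s1,t) − s1·min(s2,t) }·k1(z1,z2) + { max(min(s1,s2) − t, 0) + s1 s2 (1−t) − s1·max(s2−t,0) − s2·max(s1−t,0) }·k2(z1,z2). Then 4 ∫₀¹∫₀¹∫_ℝ∫_ℝ Z(s1,z1) Z(s2,z2) h(s1,z1,s2,z2) dz1 dz2 ds1 ds2 = (4/45)·t²(1−t)²·[ t(5 − 10t + 6t²)·∫∫ Δ̃(z1)Δ̃(z2) k1(z1,z2) dz1 dz2 + (1 − 3t + 8t² − 6t³)·∫∫ Δ̃(z1)Δ̃(z2) k2(z1,z2) dz1 dz2 ]. -/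

import Mathlib

open MeasureTheory

/-! Auxiliary definitions and lemmas. -/

private def F1aux (t s1 s2 : ℝ) : ℝ :=
  (min s1 t - s1*t) * (min s2 t - s2*t) *
    (min (min s1 s2) t + s1*s2*t - s2*min s1 t - s1*min s2 t)

private def F2aux (t s1 s2 : ℝ) : ℝ :=
  (min s1 t - s1*t) * (min s2 t - s2*t) *
    (max (min s1 s2 - t) 0 + s1*s2*(1-t) - s1*max (s2-t) 0 - s2*max (s1-t) 0)

private lemma polyInt (a b c0 c1 c2 c3 c4 : ℝ) :
    (∫ x in a..b, (c0 + c1*x + c2*x^2 + c3*x^3 + c4*x^4)) =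
      (c0*b + c1/2*b^2 + c2/3*b^3 + c3/4*b^4 + c4/5*b^5)
        - (c0*a + c1/2*a^2 + c2/3*a^3 + c3/4*a^4 + c4/5*a^5) := by
  have hd : ∀ x ∈ Set.uIcc a b,
      HasDerivAt (fun y => c0*y + c1/2*y^2 + c2/3*y^3 + c3/4*y^4 + c4/5*y^5)
        (c0 + c1*x + c2*x^2 + c3*x^3 + c4*x^4) x := by
    intro x _
    have H := ((((hasDerivAt_id x).const_mul c0).add
      ((hasDerivAt_pow 2 x).const_mul (c1/2))).add
      ((hasDerivAt_pow 3 x).const_mul (c2/3))).add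
      ((hasDerivAt_pow 4 x).const_mul (c3/4))
    have H2 := H.add ((hasDerivAt_pow 5 x).const_mul (c4/5))
    refine (H2.congr_of_eventuallyEq (Filter.Eventually.of_forall fun y => ?_)).congr_deriv ?_
    · simp only [Pi.add_apply, id]
    push_cast
    ring
  rw [intervalIntegral.integral_eq_sub_of_hasDerivAt hd
    ((by fun_prop :
      Continuous fun x : ℝ => c0 + c1*x + c2*x^2 + c3*x^3 + c4*x^4).intervalIntegrable _ _)]

private lemma pieceInt (a b : ℝ) (f : ℝ → ℝ) (c0 c1 c2 c3 c4 : ℝ)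
    (hf : ∀ x ∈ Set.uIcc a b, f x = c0 + c1*x + c2*x^2 + c3*x^3 + c4*x^4) :
    (∫ x in a..b, f x) =
      (c0*b + c1/2*b^2 + c2/3*b^3 + c3/4*b^4 + c4/5*b^5)
        - (c0*a + c1/2*a^2 + c2/3*a^3 + c3/4*a^4 + c4/5*a^5) := by
  rw [intervalIntegral.integral_congr
    (g := fun x => c0 + c1*x + c2*x^2 + c3*x^3 + c4*x^4) hf]
  exact polyInt a b c0 c1 c2 c3 c4

private lemma split2 {f : ℝ → ℝ} (a b c : ℝ) (hf : Continuous f) :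
    (∫ x in a..c, f x) = (∫ x in a..b, f x) + ∫ x in b..c, f x :=
  (intervalIntegral.integral_add_adjacent_intervals
    (hf.intervalIntegrable a b) (hf.intervalIntegrable b c)).symm

private lemma split3 {f : ℝ → ℝ} (a b c d : ℝ) (hf : Continuous f) :
    (∫ x in a..d, f x)
      = ((∫ x in a..b, f x) + ∫ x in b..c, f x) + ∫ x in c..d, f x := by
  rw [intervalIntegral.integral_add_adjacent_intervals
      (hf.intervalIntegrable a b) (hf.intervalIntegrable b c),
    intervalIntegral.integral_add_adjacent_intervals
      (hf.intervalIntegrable a c) (hf.intervalIntegrable c d)]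

private lemma K1val (t : ℝ) (h0 : 0 < t) (h1 : t < 1) :
    (∫ s1 in (0:ℝ)..1, ∫ s2 in (0:ℝ)..1, F1aux t s1 s2)
      = t^3*(1-t)^2*(5-10*t+6*t^2)/45 := by
  have hu : Continuous (Function.uncurry (F1aux t)) := by
    unfold Function.uncurry F1aux; fun_prop
  have hc : ∀ s1, Continuous fun s2 => F1aux t s1 s2 := by
    intro s1; unfold F1aux; fun_prop
  have hG : Continuous fun s1 => ∫ s2 in (0:ℝ)..1, F1aux t s1 s2 :=
    intervalIntegral.continuous_parametric_intervalIntegral_of_continuous' hu 0 1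
  have hLeq : ∀ s1 ∈ Set.uIcc (0:ℝ) t,
      (∫ s2 in (0:ℝ)..1, F1aux t s1 s2)
        = 0 + 0*s1 + (t/3 - 7/6*t^2 + 5/3*t^3 - 7/6*t^4 + 1/3*t^5)*s1^2
            + 0*s1^3 + (-(1/6) + 1/3*t - 1/6*t^2)*s1^4 := by
    intro s1 hs1
    rw [Set.uIcc_of_le h0.le] at hs1
    obtain ⟨ha, hb⟩ := hs1
    have hA : ∀ x ∈ Set.uIcc 0 s1, F1aux t s1 x
        = 0 + 0*x + (s1*(1-t)^2*(1+s1*t-2*s1))*x^2 + 0*x^3 + 0*x^4 := by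
      intro x hx
      rw [Set.uIcc_of_le ha] at hx
      obtain ⟨hx0, hx1⟩ := hx
      unfold F1aux
      rw [min_eq_right hx1, min_eq_left (hx1.trans hb), min_eq_left hb]
      ring
    have hB : ∀ x ∈ Set.uIcc s1 t, F1aux t s1 x
        = 0 + (s1^2*(1-t)^2)*x + (s1^2*(1-t)^2*(t-2))*x^2 + 0*x^3 + 0*x^4 := by
      intro x hx
      rw [Set.uIcc_of_le hb] at hx
      obtain ⟨hx0, hx1⟩ := hx
      unfold F1aux
      rw [min_eq_left hx0, min_eq_left hx1, min_eq_left hb]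
      ring
    have hC : ∀ x ∈ Set.uIcc t 1, F1aux t s1 x
        = (s1^2*t*(1-t)^2) + (-2*s1^2*t*(1-t)^2)*x + (s1^2*t*(1-t)^2)*x^2
            + 0*x^3 + 0*x^4 := by
      intro x hx
      rw [Set.uIcc_of_le h1.le] at hx
      obtain ⟨hx0, hx1⟩ := hx
      unfold F1aux
      rw [min_eq_left (hb.trans hx0), min_eq_right hx0, min_eq_left hb]
      ring
    rw [split3 0 s1 t 1 (hc s1),
      pieceInt 0 s1 _ 0 0 (s1*(1-t)^2*(1+s1*t-2*s1)) 0 0 hA,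
      pieceInt s1 t _ 0 (s1^2*(1-t)^2) (s1^2*(1-t)^2*(t-2)) 0 0 hB,
      pieceInt t 1 _ (s1^2*t*(1-t)^2) (-2*s1^2*t*(1-t)^2) (s1^2*t*(1-t)^2) 0 0 hC]
    ring
  have hReq : ∀ s1 ∈ Set.uIcc t 1,
      (∫ s2 in (0:ℝ)..1, F1aux t s1 s2)
        = ((t^3-2*t^4+t^5)/3) + (-2*(t^3-2*t^4+t^5)/3)*s1
            + ((t^3-2*t^4+t^5)/3)*s1^2 + 0*s1^3 + 0*s1^4 := by
    intro s1 hs1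
    rw [Set.uIcc_of_le h1.le] at hs1
    obtain ⟨ha, hb⟩ := hs1
    have hA : ∀ x ∈ Set.uIcc 0 t, F1aux t s1 x
        = 0 + 0*x + (t*(1-t)^2*(1-s1)^2)*x^2 + 0*x^3 + 0*x^4 := by
      intro x hx
      rw [Set.uIcc_of_le h0.le] at hx
      obtain ⟨hx0, hx1⟩ := hx
      unfold F1aux
      rw [min_eq_right (hx1.trans ha), min_eq_left hx1, min_eq_right ha]
      ring
    have hB : ∀ x ∈ Set.uIcc t 1, F1aux t s1 x
        = (t^3*(1-s1)^2) + (-2*t^3*(1-s1)^2)*x + (t^3*(1-s1)^2)*x^2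
            + 0*x^3 + 0*x^4 := by
      intro x hx
      rw [Set.uIcc_of_le h1.le] at hx
      obtain ⟨hx0, hx1⟩ := hx
      unfold F1aux
      rw [min_eq_right (le_min ha hx0), min_eq_right hx0, min_eq_right ha]
      ring
    rw [split2 0 t 1 (hc s1),
      pieceInt 0 t _ 0 0 (t*(1-t)^2*(1-s1)^2) 0 0 hA,
      pieceInt t 1 _ (t^3*(1-s1)^2) (-2*t^3*(1-s1)^2) (t^3*(1-s1)^2) 0 0 hB]
    ring
  rw [split2 0 t 1 hG,
    pieceInt 0 t _ 0 0 (t/3 - 7/6*t^2 + 5/3*t^3 - 7/6*t^4 + 1/3*t^5) 0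
      (-(1/6) + 1/3*t - 1/6*t^2) hLeq,
    pieceInt t 1 _ ((t^3-2*t^4+t^5)/3) (-2*(t^3-2*t^4+t^5)/3)
      ((t^3-2*t^4+t^5)/3) 0 0 hReq]
  ring

private lemma K2val (t : ℝ) (h0 : 0 < t) (h1 : t < 1) :
    (∫ s1 in (0:ℝ)..1, ∫ s2 in (0:ℝ)..1, F2aux t s1 s2)
      = t^2*(1-t)^2*(1-3*t+8*t^2-6*t^3)/45 := by
  have hu : Continuous (Function.uncurry (F2aux t)) := by
    unfold Function.uncurry F2aux; fun_prop
  have hc : ∀ s1, Continuous fun s2 => F2aux t s1 s2 := by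
    intro s1; unfold F2aux; fun_prop
  have hG : Continuous fun s1 => ∫ s2 in (0:ℝ)..1, F2aux t s1 s2 :=
    intervalIntegral.continuous_parametric_intervalIntegral_of_continuous' hu 0 1
  have hLeq : ∀ s1 ∈ Set.uIcc (0:ℝ) t,
      (∫ s2 in (0:ℝ)..1, F2aux t s1 s2)
        = 0 + 0*s1 + (t^2/3 - t^3 + t^4 - t^5/3)*s1^2 + 0*s1^3 + 0*s1^4 := by
    intro s1 hs1
    rw [Set.uIcc_of_le h0.le] at hs1
    obtain ⟨ha, hb⟩ := hs1
    have hA : ∀ x ∈ Set.uIcc 0 t, F2aux t s1 x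
        = 0 + 0*x + (s1^2*(1-t)^3)*x^2 + 0*x^3 + 0*x^4 := by
      intro x hx
      rw [Set.uIcc_of_le h0.le] at hx
      obtain ⟨hx0, hx1⟩ := hx
      unfold F2aux
      rw [max_eq_right (sub_nonpos.mpr ((min_le_right s1 x).trans hx1)),
        max_eq_right (sub_nonpos.mpr hx1), max_eq_right (sub_nonpos.mpr hb),
        min_eq_left hb, min_eq_left hx1]
      ring
    have hB : ∀ x ∈ Set.uIcc t 1, F2aux t s1 x
        = (s1^2*t^2*(1-t)) + (-2*s1^2*t^2*(1-t))*x + (s1^2*t^2*(1-t))*x^2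
            + 0*x^3 + 0*x^4 := by
      intro x hx
      rw [Set.uIcc_of_le h1.le] at hx
      obtain ⟨hx0, hx1⟩ := hx
      unfold F2aux
      rw [max_eq_right (sub_nonpos.mpr ((min_le_left s1 x).trans hb)),
        max_eq_left (sub_nonneg.mpr hx0), max_eq_right (sub_nonpos.mpr hb),
        min_eq_left hb, min_eq_right hx0]
      ring
    rw [split2 0 t 1 (hc s1),
      pieceInt 0 t _ 0 0 (s1^2*(1-t)^3) 0 0 hA,
      pieceInt t 1 _ (s1^2*t^2*(1-t)) (-2*s1^2*t^2*(1-t)) (s1^2*t^2*(1-t)) 0 0 hB]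
    ring
  have hReq : ∀ s1 ∈ Set.uIcc t 1,
      (∫ s2 in (0:ℝ)..1, F2aux t s1 s2)
        = (-(t^3/3) + t^4/2 - t^5/3)
            + (t^2/3 + 2*t^3/3 - t^4 + 2*t^5/3)*s1
            + (-(5*t^2/6) - t^3/3 + t^4/2 - t^5/3)*s1^2
            + (2*t^2/3)*s1^3 + (-(t^2/6))*s1^4 := by
    intro s1 hs1
    rw [Set.uIcc_of_le h1.le] at hs1
    obtain ⟨ha, hb⟩ := hs1
    have hA : ∀ x ∈ Set.uIcc 0 t, F2aux t s1 x
        = 0 + 0*x + (t^2*(1-t)*(1-s1)^2)*x^2 + 0*x^3 + 0*x^4 := by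
      intro x hx
      rw [Set.uIcc_of_le h0.le] at hx
      obtain ⟨hx0, hx1⟩ := hx
      unfold F2aux
      rw [max_eq_right (sub_nonpos.mpr ((min_le_right s1 x).trans hx1)),
        max_eq_right (sub_nonpos.mpr hx1), max_eq_left (sub_nonneg.mpr ha),
        min_eq_right ha, min_eq_left hx1]
      ring
    have hB : ∀ x ∈ Set.uIcc t s1, F2aux t s1 x
        = (-(t^3*(1-s1)^2)) + (t^2*(1+2*t)*(1-s1)^2)*x
            + (-(t^2*(1+t)*(1-s1)^2))*x^2 + 0*x^3 + 0*x^4 := by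
      intro x hx
      rw [Set.uIcc_of_le ha] at hx
      obtain ⟨hx0, hx1⟩ := hx
      unfold F2aux
      rw [min_eq_right hx1, max_eq_left (sub_nonneg.mpr hx0),
        max_eq_left (sub_nonneg.mpr ha), min_eq_right ha, min_eq_right hx0]
      ring
    have hC : ∀ x ∈ Set.uIcc s1 1, F2aux t s1 x
        = (t^2*s1*(1-s1) - t^3*(1-s1)^2)
            + (2*t^3*(1-s1)^2 - 2*t^2*s1*(1-s1))*x
            + (t^2*s1*(1-s1) - t^3*(1-s1)^2)*x^2 + 0*x^3 + 0*x^4 := by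
      intro x hx
      rw [Set.uIcc_of_le hb] at hx
      obtain ⟨hx0, hx1⟩ := hx
      unfold F2aux
      rw [min_eq_left hx0, max_eq_left (sub_nonneg.mpr ha),
        max_eq_left (sub_nonneg.mpr (ha.trans hx0)),
        min_eq_right ha, min_eq_right (ha.trans hx0)]
      ring
    rw [split3 0 t s1 1 (hc s1),
      pieceInt 0 t _ 0 0 (t^2*(1-t)*(1-s1)^2) 0 0 hA,
      pieceInt t s1 _ (-(t^3*(1-s1)^2)) (t^2*(1+2*t)*(1-s1)^2)
        (-(t^2*(1+t)*(1-s1)^2)) 0 0 hB,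
      pieceInt s1 1 _ (t^2*s1*(1-s1) - t^3*(1-s1)^2)
        (2*t^3*(1-s1)^2 - 2*t^2*s1*(1-s1)) (t^2*s1*(1-s1) - t^3*(1-s1)^2) 0 0 hC]
    ring
  rw [split2 0 t 1 hG,
    pieceInt 0 t _ 0 0 (t^2/3 - t^3 + t^4 - t^5/3) 0 0 hLeq,
    pieceInt t 1 _ (-(t^3/3) + t^4/2 - t^5/3) (t^2/3 + 2*t^3/3 - t^4 + 2*t^5/3)
      (-(5*t^2/6) - t^3/3 + t^4/2 - t^5/3) (2*t^2/3) (-(t^2/6)) hReq]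
  ring

private lemma iterated_linear {f1 f2 : ℝ → ℝ → ℝ}
    (h1 : Integrable (fun p : ℝ × ℝ => f1 p.1 p.2))
    (h2 : Integrable (fun p : ℝ × ℝ => f2 p.1 p.2)) (α β : ℝ) :
    (∫ z1 : ℝ, ∫ z2 : ℝ, (α * f1 z1 z2 + β * f2 z1 z2))
      = α * (∫ z1 : ℝ, ∫ z2 : ℝ, f1 z1 z2)
        + β * (∫ z1 : ℝ, ∫ z2 : ℝ, f2 z1 z2) := by
  have h1' : Integrable (fun p : ℝ × ℝ => f1 p.1 p.2) (volume.prod volume) := by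
    rwa [← Measure.volume_eq_prod]
  have h2' : Integrable (fun p : ℝ × ℝ => f2 p.1 p.2) (volume.prod volume) := by
    rwa [← Measure.volume_eq_prod]
  calc (∫ z1 : ℝ, ∫ z2 : ℝ, (α * f1 z1 z2 + β * f2 z1 z2))
      = ∫ z : ℝ × ℝ, (α * f1 z.1 z.2 + β * f2 z.1 z.2) ∂(volume.prod volume) :=
        MeasureTheory.integral_integral ((h1'.const_mul α).add (h2'.const_mul β))
    _ = α * (∫ z : ℝ × ℝ, f1 z.1 z.2 ∂(volume.prod volume))
          + β * (∫ z : ℝ × ℝ, f2 z.1 z.2 ∂(volume.prod volume)) := by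
        rw [integral_add (h1'.const_mul α) (h2'.const_mul β),
          integral_const_mul, integral_const_mul]
    _ = α * (∫ z1 : ℝ, ∫ z2 : ℝ, f1 z1 z2)
          + β * (∫ z1 : ℝ, ∫ z2 : ℝ, f2 z1 z2) := by
        rw [MeasureTheory.integral_integral h1', MeasureTheory.integral_integral h2']

/-- the asymptotic variance formula (5.9) of the paper. -/
theorem distribution_test_variance_formula
    (t : ℝ) (ht : t ∈ Set.Ioo (0:ℝ) 1)
    (Δ' : ℝ → ℝ) (hΔ' : Measurable Δ')
    (k1 k2 : ℝ → ℝ → ℝ)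
    (hk1 : Measurable (fun p : ℝ × ℝ => k1 p.1 p.2))
    (hk2 : Measurable (fun p : ℝ × ℝ => k2 p.1 p.2))
    (hint1 : Integrable (fun p : ℝ × ℝ => Δ' p.1 * Δ' p.2 * k1 p.1 p.2))
    (hint2 : Integrable (fun p : ℝ × ℝ => Δ' p.1 * Δ' p.2 * k2 p.1 p.2))
    (Z : ℝ → ℝ → ℝ) (hZ : ∀ s z, Z s z = (min s t - s * t) * Δ' z)
    (h : ℝ → ℝ → ℝ → ℝ → ℝ)
    (hh : ∀ s1 z1 s2 z2, h s1 z1 s2 z2 =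
      (min (min s1 s2) t + s1 * s2 * t - s2 * min s1 t - s1 * min s2 t) * k1 z1 z2
      + (max (min s1 s2 - t) 0 + s1 * s2 * (1 - t) - s1 * max (s2 - t) 0
          - s2 * max (s1 - t) 0) * k2 z1 z2) :
    4 * (∫ s1 in (0:ℝ)..1, ∫ s2 in (0:ℝ)..1,
        ∫ z1 : ℝ, ∫ z2 : ℝ, Z s1 z1 * Z s2 z2 * h s1 z1 s2 z2)
      = (4 / 45) * t ^ 2 * (1 - t) ^ 2 *
        (t * (5 - 10 * t + 6 * t ^ 2) * (∫ z1 : ℝ, ∫ z2 : ℝ, Δ' z1 * Δ' z2 * k1 z1 z2)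
          + (1 - 3 * t + 8 * t ^ 2 - 6 * t ^ 3) *
            (∫ z1 : ℝ, ∫ z2 : ℝ, Δ' z1 * Δ' z2 * k2 z1 z2)) := by
  obtain ⟨ht0, ht1⟩ := ht
  set I1 : ℝ := ∫ z1 : ℝ, ∫ z2 : ℝ, Δ' z1 * Δ' z2 * k1 z1 z2 with hI1
  set I2 : ℝ := ∫ z1 : ℝ, ∫ z2 : ℝ, Δ' z1 * Δ' z2 * k2 z1 z2 with hI2
  have key : ∀ s1 s2 : ℝ,
      (∫ z1 : ℝ, ∫ z2 : ℝ, Z s1 z1 * Z s2 z2 * h s1 z1 s2 z2)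
        = F1aux t s1 s2 * I1 + F2aux t s1 s2 * I2 := by
    intro s1 s2
    have e : ∀ z1 z2 : ℝ, Z s1 z1 * Z s2 z2 * h s1 z1 s2 z2
        = F1aux t s1 s2 * (Δ' z1 * Δ' z2 * k1 z1 z2)
          + F2aux t s1 s2 * (Δ' z1 * Δ' z2 * k2 z1 z2) := by
      intro z1 z2
      rw [hZ s1 z1, hZ s2 z2, hh s1 z1 s2 z2]
      unfold F1aux F2aux
      ring
    simp only [e]
    exact iterated_linear hint1 hint2 (F1aux t s1 s2) (F2aux t s1 s2)
  simp only [key]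
  have hc1 : ∀ s1, Continuous fun s2 => F1aux t s1 s2 := by
    intro s1; unfold F1aux; fun_prop
  have hc2 : ∀ s1, Continuous fun s2 => F2aux t s1 s2 := by
    intro s1; unfold F2aux; fun_prop
  have inner : ∀ s1 : ℝ,
      (∫ s2 in (0:ℝ)..1, (F1aux t s1 s2 * I1 + F2aux t s1 s2 * I2))
        = (∫ s2 in (0:ℝ)..1, F1aux t s1 s2) * I1
          + (∫ s2 in (0:ℝ)..1, F2aux t s1 s2) * I2 := by
    intro s1
    rw [intervalIntegral.integral_add (f := fun s2 => F1aux t s1 s2 * I1)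
        (g := fun s2 => F2aux t s1 s2 * I2)
        (((hc1 s1).mul continuous_const).intervalIntegrable _ _)
        (((hc2 s1).mul continuous_const).intervalIntegrable _ _),
      intervalIntegral.integral_mul_const, intervalIntegral.integral_mul_const]
  simp only [inner]
  have hu1 : Continuous (Function.uncurry (F1aux t)) := by
    unfold Function.uncurry F1aux; fun_prop
  have hu2 : Continuous (Function.uncurry (F2aux t)) := by
    unfold Function.uncurry F2aux; fun_prop
  have hG1 : Continuous fun s1 => ∫ s2 in (0:ℝ)..1, F1aux t s1 s2 :=
    intervalIntegral.continuous_parametric_intervalIntegral_of_continuous' hu1 0 1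
  have hG2 : Continuous fun s1 => ∫ s2 in (0:ℝ)..1, F2aux t s1 s2 :=
    intervalIntegral.continuous_parametric_intervalIntegral_of_continuous' hu2 0 1
  rw [intervalIntegral.integral_add (f := fun s1 => (∫ s2 in (0:ℝ)..1, F1aux t s1 s2) * I1)
      (g := fun s1 => (∫ s2 in (0:ℝ)..1, F2aux t s1 s2) * I2)
      ((hG1.mul continuous_const).intervalIntegrable _ _)
      ((hG2.mul continuous_const).intervalIntegrable _ _),
    intervalIntegral.integral_mul_const, intervalIntegral.integral_mul_const,
    K1val t ht0 ht1, K2val t ht0 ht1]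
  ring
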